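/- There exist a finite system T with inputs I and outputs O, a trace π of T, and an effect E ⊆ (ℕ → Set I × Set O) that is an obligation property (in fact, the union of a safety property and a guarantee property), such that some C ⊆ (ℕ → Set I) is a cause of E on π in T with respect to the subset similarity relation and C is not an obligation property. -/

import Mathlib

/-- The prefix of length `n` of the infinite word `π`, i.e. the list `[π 0, …, π (n-1)]`. -/
def wordPrefix {A : Type*} (π : ℕ → A) (n : ℕ) : List A := (List.range n).map π

/-- The set of prefixes of length `n` of words in `L`. -/
def prefN {A : Type*} (L : Set (ℕ → A)) (n : ℕ) : Set (List A) :=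
  (fun π => wordPrefix π n) '' L

/-- The set of all prefixes of words in `L`. -/
def prefAll {A : Type*} (L : Set (ℕ → A)) : Set (List A) := ⋃ n, prefN L n

/-- The set of all prefixes of the single word `π`. -/
def prefWord {A : Type*} (π : ℕ → A) : Set (List A) := {w | ∃ n, w = wordPrefix π n}

/-- `f` is prefix-continuous. -/
def PrefixContinuous {A B : Type*} (f : (ℕ → A) → Set (ℕ → B)) : Prop :=
  ∀ (n : ℕ) (π : ℕ → A), ∃ m : ℕ, ∀ π' : ℕ → A,
    wordPrefix π' m = wordPrefix π m → prefN (f π) n = prefN (f π') n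

/-- `f` is prefix-closed. -/
def PrefixClosed {A B : Type*} (f : (ℕ → A) → Set (ℕ → B)) : Prop :=
  ∀ (π : ℕ → A) (σ : ℕ → B), prefWord σ ⊆ prefAll (f π) → σ ∈ f π

/-- `f` is prefix-compact. -/
def PrefixCompact {A B : Type*} (f : (ℕ → A) → Set (ℕ → B)) : Prop :=
  ∀ (n : ℕ) (π : ℕ → A), (prefN (f π) n).Finite

/-- The universal preimage of `S` under `f`. -/
def univPreimage {A B : Type*} (f : (ℕ → A) → Set (ℕ → B)) (S : Set (ℕ → B)) :
    Set (ℕ → A) := {π | f π ⊆ S}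

/-- The existential preimage of `S` under `f`. -/
def existPreimage {A B : Type*} (f : (ℕ → A) → Set (ℕ → B)) (S : Set (ℕ → B)) :
    Set (ℕ → A) := {π | (f π ∩ S).Nonempty}

/-- `L` is a safety property. -/
def IsSafetyProperty {B : Type*} (L : Set (ℕ → B)) : Prop :=
  ∃ Φ : Set (List B), L = {π | ∀ n : ℕ, wordPrefix π n ∈ Φ}

/-- `L` is a guarantee property. -/
def IsGuaranteeProperty {B : Type*} (L : Set (ℕ → B)) : Prop :=
  ∃ Φ : Set (List B), L = {π | ∃ n : ℕ, wordPrefix π n ∈ Φ}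

/-- `L` is a recurrence property. -/
def IsRecurrenceProperty {B : Type*} (L : Set (ℕ → B)) : Prop :=
  ∃ Φ : Set (List B), L = {π | {n : ℕ | wordPrefix π n ∈ Φ}.Infinite}

/-- `L` is a persistence property. -/
def IsPersistenceProperty {B : Type*} (L : Set (ℕ → B)) : Prop :=
  ∃ Φ : Set (List B), L = {π | {n : ℕ | wordPrefix π n ∈ Φ}.Finite}

/-- A (finite-state) reactive system with states `S`, inputs `I` and outputs `O`. -/
structure FinSystem (S I O : Type*) where
  init : S
  tr : S → Set I → Set S
  lab : S → Set O

/-- `π` is a trace of the system `T`. -/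
def IsTrace {S I O : Type*} (T : FinSystem S I O) (π : ℕ → Set I × Set O) : Prop :=
  ∃ s : ℕ → S, s 0 = T.init ∧
    ∀ n : ℕ, s (n + 1) ∈ T.tr (s n) (π n).1 ∧ (π n).2 = T.lab (s (n + 1))

/-- The input component of a trace. -/
def traceInputs {I O : Type*} (π : ℕ → Set I × Set O) : ℕ → Set I := fun n => (π n).1

/-- The subset similarity relation relative to the observed trace `π`:
`σ` is at least as similar to `π` as the input sequence `ρ`. -/
def SubsetSim {I O : Type*} (π σ : ℕ → Set I × Set O) (ρ : ℕ → Set I) : Prop :=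
  ∀ (n : ℕ) (i : I), ((i ∈ (σ n).1) ≠ (i ∈ (π n).1)) → ((i ∈ ρ n) ≠ (i ∈ (π n).1))

/-- The SAT condition. -/
def SatCond {S I O : Type*} (T : FinSystem S I O) (π : ℕ → Set I × Set O)
    (E : Set (ℕ → Set I × Set O)) (C : Set (ℕ → Set I)) : Prop :=
  ∀ π' : ℕ → Set I × Set O, IsTrace T π' → traceInputs π' = traceInputs π →
    traceInputs π' ∈ C ∧ π' ∈ E

/-- The CF condition. -/
def CfCond {S I O : Type*} (T : FinSystem S I O) (π : ℕ → Set I × Set O)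
    (E : Set (ℕ → Set I × Set O)) (C : Set (ℕ → Set I)) : Prop :=
  ∀ ρ : ℕ → Set I, ρ ∉ C → ∃ σ : ℕ → Set I × Set O,
    IsTrace T σ ∧ SubsetSim π σ ρ ∧ σ ∉ E

/-- `C` is a cause of the effect `E` on the trace `π` in the system `T`,
with respect to the subset similarity relation. -/
def IsCause {S I O : Type*} (T : FinSystem S I O) (π : ℕ → Set I × Set O)
    (E : Set (ℕ → Set I × Set O)) (C : Set (ℕ → Set I)) : Prop :=
  SatCond T π E C ∧ CfCond T π E C ∧
    ¬ ∃ C' : Set (ℕ → Set I), C' ⊂ C ∧ SatCond T π E C' ∧ CfCond T π E C'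

/-- Obligation properties: the smallest collection of subsets of `B^ω` containing all
safety and all guarantee properties and closed under complement and finite unions. -/
inductive IsObligationProperty {B : Type*} : Set (ℕ → B) → Prop
  | safety (L : Set (ℕ → B)) : IsSafetyProperty L → IsObligationProperty L
  | guarantee (L : Set (ℕ → B)) : IsGuaranteeProperty L → IsObligationProperty L
  | compl (L : Set (ℕ → B)) : IsObligationProperty L → IsObligationProperty Lᶜ
  | union (L₁ L₂ : Set (ℕ → B)) : IsObligationProperty L₁ → IsObligationProperty L₂ →
      IsObligationProperty (L₁ ∪ L₂)

/-! ### Auxiliary material for the main theorem -/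

section WordPrefixAux

variable {A : Type*}

lemma wordPrefix_length (π : ℕ → A) (n : ℕ) : (wordPrefix π n).length = n := by
  simp [wordPrefix]

lemma wordPrefix_congr {x y : ℕ → A} {n : ℕ} (h : ∀ m, m < n → x m = y m) :
    wordPrefix x n = wordPrefix y n := by
  simp only [wordPrefix]
  exact List.map_congr_left (fun a ha => h a (List.mem_range.mp ha))

lemma wordPrefix_take (π : ℕ → A) (n j : ℕ) :
    (wordPrefix π n).take j = wordPrefix π (min j n) := by
  simp [wordPrefix, ← List.map_take, List.take_range]

lemma wordPrefix_getD (σ : ℕ → A) (n k : ℕ) (d : A) (h : k < n) :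
    (wordPrefix σ n).getD k d = σ k := by
  simp [wordPrefix, List.getD, List.getElem?_map, List.getElem?_range h]

end WordPrefixAux

section ObligAux

variable {B : Type*}

lemma safety_univ : IsSafetyProperty (Set.univ : Set (ℕ → B)) :=
  ⟨Set.univ, by ext π; simp⟩

lemma guarantee_univ : IsGuaranteeProperty (Set.univ : Set (ℕ → B)) :=
  ⟨Set.univ, by ext π; simp⟩

lemma compl_safety {L : Set (ℕ → B)} (h : IsSafetyProperty L) : IsGuaranteeProperty Lᶜ := by
  obtain ⟨Φ, rfl⟩ := h
  exact ⟨Φᶜ, by ext π; simp⟩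

lemma compl_guarantee {L : Set (ℕ → B)} (h : IsGuaranteeProperty L) : IsSafetyProperty Lᶜ := by
  obtain ⟨Φ, rfl⟩ := h
  exact ⟨Φᶜ, by ext π; simp⟩

lemma safety_inter {L M : Set (ℕ → B)} (hL : IsSafetyProperty L) (hM : IsSafetyProperty M) :
    IsSafetyProperty (L ∩ M) := by
  obtain ⟨Φ, rfl⟩ := hL
  obtain ⟨Ψ, rfl⟩ := hM
  refine ⟨Φ ∩ Ψ, ?_⟩
  ext π
  simp only [Set.mem_inter_iff, Set.mem_setOf_eq, forall_and]

lemma guarantee_inter {L M : Set (ℕ → B)} (hL : IsGuaranteeProperty L)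
    (hM : IsGuaranteeProperty M) : IsGuaranteeProperty (L ∩ M) := by
  obtain ⟨Φ, rfl⟩ := hL
  obtain ⟨Ψ, rfl⟩ := hM
  refine ⟨{w | (∃ j, w.take j ∈ Φ) ∧ (∃ j, w.take j ∈ Ψ)}, ?_⟩
  ext π
  simp only [Set.mem_inter_iff, Set.mem_setOf_eq]
  constructor
  · rintro ⟨⟨n₁, h₁⟩, ⟨n₂, h₂⟩⟩
    refine ⟨max n₁ n₂, ⟨n₁, ?_⟩, ⟨n₂, ?_⟩⟩
    · rw [wordPrefix_take, min_eq_left (le_max_left _ _)]; exact h₁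
    · rw [wordPrefix_take, min_eq_left (le_max_right _ _)]; exact h₂
  · rintro ⟨N, ⟨j₁, h₁⟩, ⟨j₂, h₂⟩⟩
    rw [wordPrefix_take] at h₁ h₂
    exact ⟨⟨_, h₁⟩, ⟨_, h₂⟩⟩

/-- Representation of a property as a finite union of (guarantee ∩ safety) pairs. -/
def RepBC (L : Set (ℕ → B)) : Prop :=
  ∃ P : Finset (Set (ℕ → B) × Set (ℕ → B)),
    (∀ p ∈ P, IsGuaranteeProperty p.1 ∧ IsSafetyProperty p.2) ∧
    L = ⋃ p ∈ P, p.1 ∩ p.2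

lemma rep_safety {L : Set (ℕ → B)} (h : IsSafetyProperty L) : RepBC L := by
  refine ⟨{(Set.univ, L)}, ?_, ?_⟩
  · intro p hp
    rw [Finset.mem_singleton] at hp
    subst hp
    exact ⟨guarantee_univ, h⟩
  · simp

lemma rep_guarantee {L : Set (ℕ → B)} (h : IsGuaranteeProperty L) : RepBC L := by
  refine ⟨{(L, Set.univ)}, ?_, ?_⟩
  · intro p hp
    rw [Finset.mem_singleton] at hp
    subst hp
    exact ⟨h, safety_univ⟩
  · simp

lemma rep_univ : RepBC (Set.univ : Set (ℕ → B)) := rep_safety safety_univ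

lemma rep_union {L M : Set (ℕ → B)} (hL : RepBC L) (hM : RepBC M) : RepBC (L ∪ M) := by
  classical
  obtain ⟨P, hP, rfl⟩ := hL
  obtain ⟨Q, hQ, rfl⟩ := hM
  refine ⟨P ∪ Q, ?_, ?_⟩
  · intro p hp
    rcases Finset.mem_union.mp hp with h | h
    · exact hP p h
    · exact hQ p h
  · ext x
    simp only [Set.mem_union, Set.mem_iUnion, Finset.mem_union]
    constructor
    · rintro (⟨p, hp, hx⟩ | ⟨p, hp, hx⟩)
      · exact ⟨p, Or.inl hp, hx⟩
      · exact ⟨p, Or.inr hp, hx⟩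
    · rintro ⟨p, hp | hp, hx⟩
      · exact Or.inl ⟨p, hp, hx⟩
      · exact Or.inr ⟨p, hp, hx⟩

lemma rep_inter_safety {L S : Set (ℕ → B)} (hL : RepBC L) (hS : IsSafetyProperty S) :
    RepBC (L ∩ S) := by
  classical
  obtain ⟨P, hP, rfl⟩ := hL
  refine ⟨P.image (fun p => (p.1, p.2 ∩ S)), ?_, ?_⟩
  · intro p hp
    obtain ⟨q, hq, rfl⟩ := Finset.mem_image.mp hp
    exact ⟨(hP q hq).1, safety_inter (hP q hq).2 hS⟩
  · ext x
    simp only [Set.mem_inter_iff, Set.mem_iUnion, Finset.mem_image]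
    constructor
    · rintro ⟨⟨p, hp, hx1, hx2⟩, hxS⟩
      exact ⟨(p.1, p.2 ∩ S), ⟨p, hp, rfl⟩, hx1, hx2, hxS⟩
    · rintro ⟨p', ⟨p, hp, rfl⟩, hx1, hx2, hxS⟩
      exact ⟨⟨p, hp, hx1, hx2⟩, hxS⟩

lemma rep_inter_guarantee {L G : Set (ℕ → B)} (hL : RepBC L) (hG : IsGuaranteeProperty G) :
    RepBC (L ∩ G) := by
  classical
  obtain ⟨P, hP, rfl⟩ := hL
  refine ⟨P.image (fun p => (p.1 ∩ G, p.2)), ?_, ?_⟩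
  · intro p hp
    obtain ⟨q, hq, rfl⟩ := Finset.mem_image.mp hp
    exact ⟨guarantee_inter (hP q hq).1 hG, (hP q hq).2⟩
  · ext x
    simp only [Set.mem_inter_iff, Set.mem_iUnion, Finset.mem_image]
    constructor
    · rintro ⟨⟨p, hp, hx1, hx2⟩, hxG⟩
      exact ⟨(p.1 ∩ G, p.2), ⟨p, hp, rfl⟩, ⟨hx1, hxG⟩, hx2⟩
    · rintro ⟨p', ⟨p, hp, rfl⟩, ⟨hx1, hxG⟩, hx2⟩
      exact ⟨⟨p, hp, hx1, hx2⟩, hxG⟩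

lemma rep_compl_aux :
    ∀ P : Finset (Set (ℕ → B) × Set (ℕ → B)),
      (∀ p ∈ P, IsGuaranteeProperty p.1 ∧ IsSafetyProperty p.2) →
      RepBC ((⋃ p ∈ P, (p.1 ∩ p.2 : Set (ℕ → B)))ᶜ) := by
  classical
  intro P
  induction P using Finset.induction_on with
  | empty =>
      intro _
      have : (⋃ p ∈ (∅ : Finset (Set (ℕ → B) × Set (ℕ → B))), p.1 ∩ p.2)ᶜ
          = (Set.univ : Set (ℕ → B)) := by simp
      rw [this]
      exact rep_univ
  | @insert a P' ha IH =>
      intro hP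
      have hU : (⋃ p ∈ insert a P', p.1 ∩ p.2)ᶜ
          = ((⋃ p ∈ P', p.1 ∩ p.2)ᶜ ∩ a.1ᶜ) ∪ ((⋃ p ∈ P', p.1 ∩ p.2)ᶜ ∩ a.2ᶜ) := by
        rw [Finset.set_biUnion_insert, Set.compl_union, Set.compl_inter]
        rw [Set.union_inter_distrib_right]
        rw [Set.inter_comm a.1ᶜ, Set.inter_comm a.2ᶜ]
      rw [hU]
      have hrest := IH (fun p hp => hP p (Finset.mem_insert_of_mem hp))
      have ha1 : IsGuaranteeProperty a.1 := (hP a (Finset.mem_insert_self a P')).1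
      have ha2 : IsSafetyProperty a.2 := (hP a (Finset.mem_insert_self a P')).2
      exact rep_union (rep_inter_safety hrest (compl_guarantee ha1))
        (rep_inter_guarantee hrest (compl_safety ha2))

lemma rep_compl {L : Set (ℕ → B)} (hL : RepBC L) : RepBC Lᶜ := by
  obtain ⟨P, hP, rfl⟩ := hL
  exact rep_compl_aux P hP

lemma oblig_rep {L : Set (ℕ → B)} (h : IsObligationProperty L) : RepBC L := by
  induction h with
  | safety L hL => exact rep_safety hL
  | guarantee L hL => exact rep_guarantee hL
  | compl L _ IH => exact rep_compl IH
  | union L₁ L₂ _ _ IH₁ IH₂ => exact rep_union IH₁ IH₂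

end ObligAux

/-! ### The concrete counterexample -/

/-- The counterexample system: two states recording the current output bit, with
fully nondeterministic transitions. -/
def Tex : FinSystem Bool Unit Unit where
  init := true
  tr := fun _ _ => Set.univ
  lab := fun b => if b then Set.univ else ∅

/-- The observed trace: all inputs and outputs are "true" (i.e. `Set.univ`). -/
def piex : ℕ → Set Unit × Set Unit := fun _ => (Set.univ, Set.univ)

/-- The safety part of the effect: the output is always "true". -/
def L1ex : Set (ℕ → Set Unit × Set Unit) := {σ | ∀ k, () ∈ (σ k).2}

/-- A bad pattern at position `k`: either a true input with false output, or a false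
output followed by a true output. -/
def badpat (σ : ℕ → Set Unit × Set Unit) (k : ℕ) : Prop :=
  (() ∈ (σ k).1 ∧ () ∉ (σ k).2) ∨ (() ∉ (σ k).2 ∧ () ∈ (σ (k + 1)).2)

/-- The guarantee part of the effect: some bad pattern occurs. -/
def L2ex : Set (ℕ → Set Unit × Set Unit) := {σ | ∃ k, badpat σ k}

/-- The effect. -/
def Eex : Set (ℕ → Set Unit × Set Unit) := L1ex ∪ L2ex

/-- The cause: infinitely many true inputs. -/
def Cex : Set (ℕ → Set Unit) := {ρ | ∀ n, ∃ m, n ≤ m ∧ () ∈ ρ m}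

lemma L1ex_safety : IsSafetyProperty L1ex := by
  refine ⟨{w | ∀ p ∈ w, () ∈ p.2}, ?_⟩
  ext σ
  simp only [L1ex, Set.mem_setOf_eq]
  constructor
  · intro h n p hp
    simp only [wordPrefix, List.mem_map, List.mem_range] at hp
    obtain ⟨k, _, rfl⟩ := hp
    exact h k
  · intro h k
    refine h (k + 1) (σ k) ?_
    simp only [wordPrefix, List.mem_map, List.mem_range]
    exact ⟨k, Nat.lt_succ_self k, rfl⟩

lemma L2ex_guarantee : IsGuaranteeProperty L2ex := by
  classical
  refine ⟨{w | ∃ k, k + 1 < w.length ∧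
    ((() ∈ (w.getD k ((∅ : Set Unit), (∅ : Set Unit))).1 ∧
        () ∉ (w.getD k ((∅ : Set Unit), (∅ : Set Unit))).2) ∨
      (() ∉ (w.getD k ((∅ : Set Unit), (∅ : Set Unit))).2 ∧
        () ∈ (w.getD (k + 1) ((∅ : Set Unit), (∅ : Set Unit))).2))}, ?_⟩
  ext σ
  simp only [L2ex, Set.mem_setOf_eq, badpat]
  constructor
  · rintro ⟨k, hk⟩
    refine ⟨k + 2, k, ?_, ?_⟩
    · rw [wordPrefix_length]; omega
    · rw [wordPrefix_getD σ (k + 2) k _ (by omega),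
        wordPrefix_getD σ (k + 2) (k + 1) _ (by omega)]
      exact hk
  · rintro ⟨n, k, hn, hpat⟩
    rw [wordPrefix_length] at hn
    rw [wordPrefix_getD σ n k _ (by omega), wordPrefix_getD σ n (k + 1) _ (by omega)] at hpat
    exact ⟨k, hpat⟩

lemma piex_trace : IsTrace Tex piex := by
  refine ⟨fun _ => true, rfl, fun n => ⟨Set.mem_univ _, ?_⟩⟩
  simp [piex, Tex]

lemma notE_char {σ : ℕ → Set Unit × Set Unit} (h : σ ∉ Eex) :
    ∃ n₁, ∀ m, n₁ ≤ m → () ∉ (σ m).2 ∧ () ∉ (σ m).1 := by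
  have h1 : σ ∉ L1ex := fun hc => h (Or.inl hc)
  have h2 : σ ∉ L2ex := fun hc => h (Or.inr hc)
  simp only [L1ex, Set.mem_setOf_eq, not_forall] at h1
  obtain ⟨n₁, hn₁⟩ := h1
  simp only [L2ex, Set.mem_setOf_eq, not_exists, badpat, not_or, not_and, not_not] at h2
  refine ⟨n₁, ?_⟩
  have hout : ∀ d, () ∉ (σ (n₁ + d)).2 := by
    intro d
    induction d with
    | zero => simpa using hn₁
    | succ d IH =>
        intro hc
        have := (h2 (n₁ + d)).2 IH
        rw [Nat.add_assoc] at this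
        exact this hc
  intro m hm
  obtain ⟨d, rfl⟩ := Nat.exists_eq_add_of_le hm
  refine ⟨hout d, ?_⟩
  intro hc
  exact hout d ((h2 (n₁ + d)).1 hc)

lemma sat_ex : SatCond Tex piex Eex Cex := by
  intro π' _ hin
  have hin' : ∀ n, (π' n).1 = (Set.univ : Set Unit) := fun n => congrFun hin n
  constructor
  · intro n
    refine ⟨n, le_refl n, ?_⟩
    show () ∈ traceInputs π' n
    rw [show traceInputs π' n = (π' n).1 from rfl, hin' n]
    trivial
  · by_cases h : ∀ k, () ∈ (π' k).2
    · exact Or.inl h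
    · push_neg at h
      obtain ⟨k, hk⟩ := h
      refine Or.inr ⟨k, Or.inl ⟨?_, hk⟩⟩
      rw [hin' k]
      trivial

lemma cf_ex : CfCond Tex piex Eex Cex := by
  intro ρ hρ
  simp only [Cex, Set.mem_setOf_eq, not_forall] at hρ
  obtain ⟨n₀, hn₀⟩ := hρ
  push_neg at hn₀
  refine ⟨fun m => (ρ m, if m < n₀ then Set.univ else ∅), ?_, ?_, ?_⟩
  · refine ⟨fun m => decide (m ≤ n₀), by simp [Tex], fun n => ⟨Set.mem_univ _, ?_⟩⟩
    show (if n < n₀ then (Set.univ : Set Unit) else ∅) = Tex.lab (decide (n + 1 ≤ n₀))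
    by_cases h : n < n₀ <;>
      simp [Tex, h, Nat.add_one_le_iff]
  · intro n i hne
    exact hne
  · intro hE
    rcases hE with hE | hE
    · have := hE n₀
      simp at this
    · obtain ⟨k, hk⟩ := hE
      rcases hk with ⟨hk1, hk2⟩ | ⟨hk1, hk2⟩
      · by_cases h : k < n₀
        · exact hk2 (by simp [h])
        · exact hn₀ k (Nat.le_of_not_lt h) hk1
      · have h : ¬ k < n₀ := fun hc => hk1 (by simp [hc])
        exact absurd hk2 (by simp; omega)

lemma min_ex : ¬ ∃ C' : Set (ℕ → Set Unit), C' ⊂ Cex ∧ SatCond Tex piex Eex C' ∧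
    CfCond Tex piex Eex C' := by
  rintro ⟨C', hsub, _, hcf⟩
  obtain ⟨ρ, hρC, hρC'⟩ := Set.exists_of_ssubset hsub
  obtain ⟨σ, _, hsim, hσE⟩ := hcf ρ hρC'
  obtain ⟨n₁, hkey⟩ := notE_char hσE
  obtain ⟨m, hm, hmem⟩ := hρC n₁
  have h1 : () ∉ (σ m).1 := (hkey m hm).2
  have hdiff : (() ∈ (σ m).1) ≠ (() ∈ (piex m).1) := by
    simp only [piex]
    rw [ne_eq, eq_iff_iff]
    intro hiff
    exact h1 (hiff.mpr trivial)
  have := hsim m () hdiff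
  rw [ne_eq, eq_iff_iff] at this
  exact this ⟨fun _ => trivial, fun _ => hmem⟩

lemma main_lemma :
    ∀ (k : ℕ) (P : Finset (Set (ℕ → Set Unit) × Set (ℕ → Set Unit))),
      P.card = k →
      (∀ p ∈ P, IsGuaranteeProperty p.1 ∧ IsSafetyProperty p.2) →
      ∀ (N : ℕ) (b : ℕ → Set Unit),
        ¬ (∀ x : ℕ → Set Unit, (∀ m, m < N → x m = b m) →
            (x ∈ Cex ↔ x ∈ ⋃ p ∈ P, (p.1 ∩ p.2 : Set (ℕ → Set Unit)))) := by
  intro k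
  induction k with
  | zero =>
      intro P hcard _ N b hrep
      have hP : P = ∅ := Finset.card_eq_zero.mp hcard
      subst hP
      set x₀ : ℕ → Set Unit := fun m => if m < N then b m else Set.univ with hx₀def
      have hx₀C : x₀ ∈ Cex := by
        intro n
        refine ⟨max n N, le_max_left _ _, ?_⟩
        simp [hx₀def, Nat.not_lt.mpr (le_max_right n N)]
      have := (hrep x₀ (fun m hm => by simp [hx₀def, hm])).mp hx₀C
      simp at this
  | succ k IH =>
      intro P hcard hprops N b hrep
      classical
      set x₀ : ℕ → Set Unit := fun m => if m < N then b m else Set.univ with hx₀def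
      have hx₀C : x₀ ∈ Cex := by
        intro n
        refine ⟨max n N, le_max_left _ _, ?_⟩
        simp [hx₀def, Nat.not_lt.mpr (le_max_right n N)]
      have hx₀U := (hrep x₀ (fun m hm => by simp [hx₀def, hm])).mp hx₀C
      rw [Set.mem_iUnion₂] at hx₀U
      obtain ⟨q, hqP, hx₀q1, hx₀q2⟩ := hx₀U
      obtain ⟨Φ, hΦ⟩ := (hprops q hqP).1
      obtain ⟨Ψ, hΨ⟩ := (hprops q hqP).2
      rw [hΦ] at hx₀q1
      obtain ⟨n₀, hn₀⟩ := hx₀q1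
      set N₁ := max N n₀ with hN₁def
      set y : ℕ → Set Unit := fun m => if m < N₁ then x₀ m else ∅ with hydef
      have hyC : y ∉ Cex := by
        intro h
        obtain ⟨m, hm, hmem⟩ := h N₁
        simp [hydef, Nat.not_lt.mpr hm] at hmem
      have hyb : ∀ m, m < N → y m = b m := by
        intro m hm
        have h1 : m < N₁ := lt_of_lt_of_le hm (le_max_left _ _)
        simp [hydef, h1, hx₀def, hm]
      have hyU : y ∉ ⋃ p ∈ P, (p.1 ∩ p.2 : Set (ℕ → Set Unit)) :=
        fun h => hyC ((hrep y hyb).mpr h)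
      have hyq1 : y ∈ q.1 := by
        rw [hΦ]
        refine ⟨n₀, ?_⟩
        rwa [wordPrefix_congr (x := y) (y := x₀)
          (fun m hm => by simp only [hydef]; exact if_pos (show m < N₁ from lt_of_lt_of_le hm (le_max_right N n₀)))]
      have hyq2 : y ∉ q.2 := by
        intro h
        exact hyU (Set.mem_iUnion₂.mpr ⟨q, hqP, hyq1, h⟩)
      rw [hΨ] at hyq2
      simp only [Set.mem_setOf_eq, not_forall] at hyq2
      obtain ⟨m₀, hm₀⟩ := hyq2
      set N₂ := max N₁ m₀ with hN₂def
      refine IH (P.erase q) ?_ (fun p hp => hprops p (Finset.mem_of_mem_erase hp)) N₂ y ?_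
      · rw [Finset.card_erase_of_mem hqP, hcard]
        omega
      intro x hx
      have hxb : ∀ m, m < N → x m = b m := by
        intro m hm
        rw [hx m (lt_of_lt_of_le (lt_of_lt_of_le hm (le_max_left N n₀)) (le_max_left N₁ m₀))]
        exact hyb m hm
      have hxq2 : x ∉ q.2 := by
        rw [hΨ]
        simp only [Set.mem_setOf_eq, not_forall]
        refine ⟨m₀, ?_⟩
        rwa [wordPrefix_congr (x := x) (y := y)
          (fun m hm => hx m (lt_of_lt_of_le hm (le_max_right N₁ m₀)))]
      rw [hrep x hxb]
      constructor
      · intro h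
        rw [Set.mem_iUnion₂] at h ⊢
        obtain ⟨p, hp, hxp⟩ := h
        exact ⟨p, Finset.mem_erase.mpr ⟨fun he => hxq2 (he ▸ hxp.2), hp⟩, hxp⟩
      · intro h
        rw [Set.mem_iUnion₂] at h ⊢
        obtain ⟨p, hp, hxp⟩ := h
        exact ⟨p, Finset.mem_of_mem_erase hp, hxp⟩

lemma Cex_not_oblig : ¬ IsObligationProperty Cex := by
  intro h
  obtain ⟨P, hprops, heq⟩ := oblig_rep h
  exact main_lemma P.card P rfl hprops 0 (fun _ => ∅)
    (fun x _ => by rw [← heq])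


/-- There is an obligation effect (a union of a safety and a guarantee property) whose cause,
with respect to the subset similarity relation, is not an obligation property. -/
theorem obligation_not_closed_under_causality :
    ∃ (S I O : Type) (_ : Fintype S) (_ : Fintype I) (_ : Fintype O)
      (T : FinSystem S I O) (π : ℕ → Set I × Set O) (_ : IsTrace T π)
      (E : Set (ℕ → Set I × Set O)) (C : Set (ℕ → Set I)),
      (∃ L₁ L₂ : Set (ℕ → Set I × Set O),
        IsSafetyProperty L₁ ∧ IsGuaranteeProperty L₂ ∧ E = L₁ ∪ L₂) ∧
      IsCause T π E C ∧ ¬ IsObligationProperty C := by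
  refine ⟨Bool, Unit, Unit, inferInstance, inferInstance, inferInstance, Tex, piex,
    piex_trace, Eex, Cex, ⟨L1ex, L2ex, L1ex_safety, L2ex_guarantee, rfl⟩,
    ⟨sat_ex, cf_ex, min_ex⟩, Cex_not_oblig⟩
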